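/- The first passage time S under periodic resetting with period τ satisfies, for every natural number n and every real u with 0 ≤ u < τ, the survival-probability factorization P(S > nτ + u) = P(T > τ)ⁿ · P(T > u). In particular, the probability of surviving past n full resetting periods decays geometrically (exponentially) in n. -/

import Mathlib

open MeasureTheory ProbabilityTheory

/-- Under periodic resetting with period `τ > 0` (where `P(T ≤ τ) > 0`), the first passage
time `S = (N−1)τ + T_N` (with `(Tₙ)` i.i.d. copies of `T` and `N` the first index with
`Tₙ ≤ τ`) satisfies, for every `n : ℕ` and `0 ≤ u < τ`,
`P(S > nτ + u) = P(T > τ)ⁿ · P(T > u)`; in particular the survival probability decays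
geometrically in the number of full resetting periods. -/
theorem stmt12 {Ω : Type*} [MeasurableSpace Ω] (μ : Measure Ω) [IsProbabilityMeasure μ]
    (T : Ω → ℝ) (hTm : Measurable T) (hTnn : ∀ ω, 0 ≤ T ω)
    (τ : ℝ) (hτ : 0 < τ) (hpos : 0 < μ {ω | T ω ≤ τ})
    (Tseq : ℕ → Ω → ℝ)
    (hTseqm : ∀ n, Measurable (Tseq n))
    (hiid : iIndepFun Tseq μ)
    (hTdist : ∀ n, IdentDistrib (Tseq n) T μ μ)
    (N : Ω → ℕ) (hN : ∀ ω, N ω = sInf {n | Tseq n ω ≤ τ})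
    (hNfin : ∀ᵐ ω ∂μ, ∃ n, Tseq n ω ≤ τ)
    (S : Ω → ℝ)
    (hS : ∀ ω, S ω = (N ω : ℝ) * τ + Tseq (N ω) ω) :
    ∀ (n : ℕ) (u : ℝ), 0 ≤ u → u < τ →
      μ {ω | (n : ℝ) * τ + u < S ω} = (μ {ω | τ < T ω}) ^ n * μ {ω | u < T ω} := by
  intro n u hu huτ
  -- a.s. all Tseq m are nonnegative
  have hnn : ∀ᵐ ω ∂μ, ∀ m, 0 ≤ Tseq m ω := by
    rw [MeasureTheory.ae_all_iff]
    intro m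
    have h0 : μ {ω | Tseq m ω < 0} = μ {ω | T ω < 0} :=
      (hTdist m).measure_mem_eq (measurableSet_Iio (a := (0:ℝ)))
    have : {ω | T ω < 0} = (∅ : Set Ω) := by
      ext ω; simp [not_lt.2 (hTnn ω)]
    have h1 : μ {ω | Tseq m ω < 0} = 0 := by rw [h0, this, measure_empty]
    rw [Filter.eventually_iff, MeasureTheory.mem_ae_iff]
    convert h1 using 2
    ext ω; simp [not_le]
  -- the a.e. set identity
  have hae : {ω | (n : ℝ) * τ + u < S ω}
      =ᵐ[μ] ⋂ k ∈ Finset.range (n + 1),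
        Tseq k ⁻¹' Set.Ioi (if k = n then u else τ) := by
    rw [Filter.eventuallyEq_set]
    filter_upwards [hNfin, hnn] with ω hfin hnnω
    have hNmem : Tseq (N ω) ω ≤ τ := by
      rw [hN ω]; exact Nat.sInf_mem hfin
    have hNlt : ∀ k < N ω, τ < Tseq k ω := by
      intro k hk
      by_contra h
      have h2 : k ∈ {n | Tseq n ω ≤ τ} := not_lt.1 h
      have := Nat.sInf_le h2
      rw [← hN ω] at this
      omega
    simp only [Set.mem_setOf_eq, Set.mem_iInter, Set.mem_preimage, Set.mem_Ioi,
      Finset.mem_range]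
    constructor
    · intro hlt k hk
      -- must have N ω ≥ n, else S ≤ nτ ≤ nτ+u
      have hNge : n ≤ N ω := by
        by_contra h
        push_neg at h
        have : S ω ≤ (n : ℝ) * τ := by
          rw [hS ω]
          have h1 : (N ω : ℝ) + 1 ≤ (n : ℝ) := by exact_mod_cast h
          nlinarith [hNmem, hτ.le]
        linarith
      rcases lt_or_eq_of_le (Nat.lt_succ_iff.1 hk) with hk' | hk'
      · simp only [Nat.ne_of_lt hk', if_false]
        exact hNlt k (lt_of_lt_of_le hk' hNge)
      · subst hk'
        simp only [if_true]
        rcases eq_or_lt_of_le hNge with hEq | hLt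
        · rw [hS ω, ← hEq] at hlt; linarith
        · exact lt_of_lt_of_le huτ (hNlt k hLt).le
    · intro h
      -- N ω ≥ n since Tseq k > τ for k < n
      have hNge : n ≤ N ω := by
        by_contra hc
        push_neg at hc
        have := h (N ω) (by omega)
        rcases Nat.eq_or_lt_of_le (Nat.le_of_lt_succ (by omega : N ω < n + 1)) with h1 | h1
        · omega
        · simp only [Nat.ne_of_lt hc, if_false] at this
          linarith
      rw [hS ω]
      rcases eq_or_lt_of_le hNge with hEq | hLt
      · have := h n (by omega)
        simp only [if_true] at this
        rw [← hEq]
        nlinarith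
      · have h1 : (n : ℝ) + 1 ≤ (N ω : ℝ) := by exact_mod_cast hLt
        nlinarith [hnnω (N ω)]
  rw [measure_congr hae]
  rw [hiid.meas_biInter (S := Finset.range (n + 1))
    (s := fun k => Tseq k ⁻¹' Set.Ioi (if k = n then u else τ))
    (fun k _ => ⟨Set.Ioi _, measurableSet_Ioi, rfl⟩)]
  have hfac : ∀ k, μ (Tseq k ⁻¹' Set.Ioi (if k = n then u else τ))
      = μ (T ⁻¹' Set.Ioi (if k = n then u else τ)) := fun k =>
    (hTdist k).measure_mem_eq measurableSet_Ioi
  rw [Finset.prod_congr rfl (fun k _ => hfac k), Finset.prod_range_succ]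
  simp only [if_true]
  rw [Finset.prod_congr rfl (fun k hk => by
    rw [if_neg (Nat.ne_of_lt (Finset.mem_range.1 hk))]),
    Finset.prod_const, Finset.card_range]
  rfl
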